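/- arXiv:1010.4517 — 2 statements merged into one kernel-verified Lean document; each statement's English description precedes it below -/
import Mathlib

section
/- For every n ≥ 1 and every vector x ∈ ℝⁿ, letting μ = (1/n)∑_{j=1}^n x_j denote its mean, one has ∑_{i=1}^n (x_i − μ)·tanh(x_i) ≥ 0. Equivalently, with P = I − (1/n)𝟙𝟙ᵀ the orthogonal projection onto the zero-mean subspace of ℝⁿ and tanh applied elementwise, ⟨Px, tanh(x)⟩ ≥ 0. -/
lemma tanh_mono : Monotone Real.tanh := by
  intro a b hab
  rw [Real.tanh_eq_sinh_div_cosh, Real.tanh_eq_sinh_div_cosh,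
    div_le_div_iff₀ (Real.cosh_pos a) (Real.cosh_pos b)]
  have h : Real.sinh (a - b) ≤ 0 := Real.sinh_nonpos_iff.mpr (by linarith)
  rw [Real.sinh_sub] at h
  linarith

/-- **Lemma 1 of the paper, lower bound.** For every `n ≥ 1` and `x ∈ ℝⁿ`, with
`μ = (1/n) ∑ⱼ xⱼ` the mean of the entries, `⟨Px, tanh x⟩ = ∑ᵢ (xᵢ - μ)·tanh(xᵢ) ≥ 0`,
where `P = I - (1/n)𝟙𝟙ᵀ` is the projection onto the zero-mean subspace and `tanh`
is applied elementwise. -/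
theorem fluctuation_tanh_inner_nonneg (n : ℕ) (hn : 1 ≤ n) (x : Fin n → ℝ) :
    0 ≤ ∑ i, (x i - (∑ j, x j) / n) * Real.tanh (x i) := by
  have hmono : Monovary x (fun i => Real.tanh (x i)) := fun i j h => le_of_not_gt fun hc => absurd (tanh_mono hc.le) (not_le.mpr h)
  have hcheb := hmono.sum_mul_sum_le_card_mul_sum
  simp only [Fintype.card_fin] at hcheb
  have hn' : (0:ℝ) < n := by positivity
  have key : (∑ j, x j) / n * ∑ i, Real.tanh (x i) ≤ ∑ i, x i * Real.tanh (x i) := by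
    rw [div_mul_eq_mul_div, div_le_iff₀ hn']
    calc (∑ j, x j) * ∑ i, Real.tanh (x i) ≤ (n:ℝ) * ∑ i, x i * Real.tanh (x i) := hcheb
      _ = (∑ i, x i * Real.tanh (x i)) * n := by ring
  have expand : ∑ i, (x i - (∑ j, x j) / n) * Real.tanh (x i)
      = (∑ i, x i * Real.tanh (x i)) - (∑ j, x j) / n * ∑ i, Real.tanh (x i) := by
    rw [Finset.mul_sum, ← Finset.sum_sub_distrib]
    congr 1 with i
    ring
  rw [expand]
  linarith
end

section
/- For every n ≥ 1 and every vector x ∈ ℝⁿ, letting μ = (1/n)∑_{j=1}^n x_j denote its mean, one has ∑_{i=1}^n (x_i − μ)·tanh(x_i) ≤ ∑_{i=1}^n (x_i − μ)². Equivalently, with P = I − (1/n)𝟙𝟙ᵀ the orthogonal projection onto the zero-mean subspace of ℝⁿ and tanh applied elementwise, ⟨Px, tanh(x)⟩ ≤ ‖Px‖². -/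
lemma tanh_hasDerivAt (x : ℝ) :
    HasDerivAt Real.tanh (1 / Real.cosh x ^ 2) x := by
  have h := (Real.hasDerivAt_sinh x).div (Real.hasDerivAt_cosh x)
    (ne_of_gt (Real.cosh_pos x))
  have heq : (Real.cosh x * Real.cosh x - Real.sinh x * Real.sinh x) / Real.cosh x ^ 2
      = 1 / Real.cosh x ^ 2 := by
    rw [← Real.cosh_sq_sub_sinh_sq x]; ring
  have : HasDerivAt (fun y => Real.sinh y / Real.cosh y) (1 / Real.cosh x ^ 2) x := by
    rw [← heq]; exact h
  convert this using 1
  ext y; exact Real.tanh_eq_sinh_div_cosh y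

lemma tanh_lipschitz : LipschitzWith 1 Real.tanh := by
  apply lipschitzWith_of_nnnorm_deriv_le
  · exact fun x => (tanh_hasDerivAt x).differentiableAt
  · intro x
    have hd : deriv Real.tanh x = 1 / Real.cosh x ^ 2 := (tanh_hasDerivAt x).deriv
    have h1 : (1:ℝ) ≤ Real.cosh x ^ 2 := by
      nlinarith [Real.one_le_cosh x]
    have : ‖deriv Real.tanh x‖ ≤ 1 := by
      rw [hd, Real.norm_eq_abs, abs_of_pos (by positivity)]
      rw [div_le_one (by positivity)]; exact h1
    simpa [← NNReal.coe_le_coe] using this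

lemma key (a b : ℝ) : (a - b) * (Real.tanh a - Real.tanh b) ≤ (a - b) ^ 2 := by
  have h := tanh_lipschitz.dist_le_mul a b
  rw [Real.dist_eq, Real.dist_eq, NNReal.coe_one, one_mul] at h
  calc (a - b) * (Real.tanh a - Real.tanh b)
      ≤ |a - b| * |Real.tanh a - Real.tanh b| := by
        rw [← abs_mul]; exact le_abs_self _
    _ ≤ |a - b| * |a - b| := by
        exact mul_le_mul_of_nonneg_left h (abs_nonneg _)
    _ = (a - b) ^ 2 := by rw [abs_mul_abs_self]; ring

/-- **Lemma 1 of the paper, upper bound.** For every `n ≥ 1` and `x ∈ ℝⁿ`, with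
`μ = (1/n) ∑ⱼ xⱼ` the mean of the entries, `⟨Px, tanh x⟩ = ∑ᵢ (xᵢ - μ)·tanh(xᵢ)`
is at most `‖Px‖² = ∑ᵢ (xᵢ - μ)²`. -/
theorem fluctuation_tanh_inner_le (n : ℕ) (hn : 1 ≤ n) (x : Fin n → ℝ) :
    ∑ i, (x i - (∑ j, x j) / n) * Real.tanh (x i) ≤
      ∑ i, (x i - (∑ j, x j) / n) ^ 2 := by
  set μ : ℝ := (∑ j, x j) / n with hμ
  have hsum : ∑ i, (x i - μ) = 0 := by
    rw [Finset.sum_sub_distrib, Finset.sum_const, Finset.card_univ, Fintype.card_fin]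
    have hn' : (n:ℝ) ≠ 0 := by exact_mod_cast Nat.one_le_iff_ne_zero.mp hn
    rw [hμ, nsmul_eq_mul]; field_simp; ring
  have heq : ∑ i, (x i - μ) * Real.tanh (x i)
      = ∑ i, (x i - μ) * (Real.tanh (x i) - Real.tanh μ) := by
    rw [Finset.sum_congr rfl (fun i _ => by ring :
      ∀ i ∈ Finset.univ, (x i - μ) * (Real.tanh (x i) - Real.tanh μ)
        = (x i - μ) * Real.tanh (x i) - (x i - μ) * Real.tanh μ)]
    rw [Finset.sum_sub_distrib, ← Finset.sum_mul, hsum, zero_mul, sub_zero]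
  rw [heq]
  exact Finset.sum_le_sum fun i _ => key (x i) μ
end
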